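/- Let S be a nonempty subset of ℝ × (0, ∞) (pairs (m, s) of admissible means and standard deviations) and let b ∈ ℝ satisfy b > m for every (m, s) ∈ S. Then the infimum, over all probability measures P on ℝ with finite second moment whose mean-and-standard-deviation pair (μ_P, σ_P) lies in S, of P((-∞, b]), equals the infimum over (m, s) ∈ S of (b − m)² / (s² + (b − m)²). (This makes precise the paper's two-layer decomposition (14) combined with the tight Cantelli bound (15) for the decision-dependent ambiguity set R₂.) -/

import Mathlib

open MeasureTheory Set

lemma my_integrable_dirac {f : ℝ → ℝ} (hf : Measurable f) (a : ℝ) :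
    Integrable f (Measure.dirac a) := by
  constructor
  · exact hf.aestronglyMeasurable
  · rw [HasFiniteIntegral, lintegral_dirac' _ (by measurability)]
    exact ENNReal.coe_lt_top

lemma integral_two_point (p q a c : ℝ) (hp : 0 ≤ p) (hq : 0 ≤ q) {f : ℝ → ℝ}
    (hf : Measurable f) :
    ∫ x, f x ∂(ENNReal.ofReal p • Measure.dirac a + ENNReal.ofReal q • Measure.dirac c)
      = p * f a + q * f c := by
  rw [integral_add_measure ((my_integrable_dirac hf a).smul_measure ENNReal.ofReal_ne_top)
      ((my_integrable_dirac hf c).smul_measure ENNReal.ofReal_ne_top),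
    integral_smul_measure, integral_smul_measure, integral_dirac, integral_dirac,
    ENNReal.toReal_ofReal hp, ENNReal.toReal_ofReal hq]
  rfl

lemma exists_two_point (m s b u : ℝ) (hs : 0 < s) (hmb : m < b) (hu : b - m < u) :
    ∃ P : Measure ℝ, IsProbabilityMeasure P ∧ Integrable (fun x : ℝ => x ^ 2) P ∧
      (∫ x, x ∂P) = m ∧ (∫ x, (x - m) ^ 2 ∂P) = s ^ 2 ∧
      (P (Set.Iic b)).toReal = u ^ 2 / (s ^ 2 + u ^ 2) := by
  have hu0 : 0 < u := lt_trans (by linarith) hu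
  have hden : 0 < s ^ 2 + u ^ 2 := by positivity
  set p : ℝ := u ^ 2 / (s ^ 2 + u ^ 2) with hpdef
  set q : ℝ := s ^ 2 / (s ^ 2 + u ^ 2) with hqdef
  have hp : 0 ≤ p := by positivity
  have hq : 0 ≤ q := by positivity
  have hpq : p + q = 1 := by
    rw [hpdef, hqdef, ← add_div, add_comm, div_self hden.ne']
  set a : ℝ := m - s ^ 2 / u with hadef
  set c : ℝ := m + u with hcdef
  refine ⟨ENNReal.ofReal p • Measure.dirac a + ENNReal.ofReal q • Measure.dirac c, ?_, ?_, ?_, ?_, ?_⟩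
  · constructor
    rw [Measure.add_apply, Measure.smul_apply, Measure.smul_apply]
    simp only [measure_univ, smul_eq_mul, mul_one]
    rw [← ENNReal.ofReal_add hp hq, hpq, ENNReal.ofReal_one]
  · exact ((my_integrable_dirac (by measurability) a).smul_measure ENNReal.ofReal_ne_top).add_measure
      ((my_integrable_dirac (by measurability) c).smul_measure ENNReal.ofReal_ne_top)
  · rw [integral_two_point p q a c hp hq (f := fun x => x) measurable_id]
    rw [hpdef, hqdef, hadef, hcdef]
    field_simp
    ring
  · rw [integral_two_point p q a c hp hq (by measurability)]
    rw [hpdef, hqdef, hadef, hcdef]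
    field_simp
    ring
  · have hab : a ∈ Iic b := by
      simp only [hadef, mem_Iic]
      have h5 : 0 < s ^ 2 / u := by positivity
      linarith
    have hcb : c ∉ Iic b := by
      simp only [hcdef, mem_Iic, not_le]
      linarith
    rw [Measure.add_apply, Measure.smul_apply, Measure.smul_apply,
      Measure.dirac_apply' a measurableSet_Iic, Measure.dirac_apply' c measurableSet_Iic,
      indicator_of_mem hab, indicator_of_notMem hcb]
    simp [ENNReal.toReal_ofReal hp]

lemma cantelli (P : Measure ℝ) (hP : IsProbabilityMeasure P)
    (h2 : Integrable (fun x : ℝ => x ^ 2) P) {b : ℝ} (hb : (∫ x, x ∂P) < b) :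
    (b - ∫ x, x ∂P) ^ 2 / ((∫ x, (x - ∫ y, y ∂P) ^ 2 ∂P) + (b - ∫ x, x ∂P) ^ 2)
      ≤ (P (Set.Iic b)).toReal := by
  set μ : ℝ := ∫ x, x ∂P with hμ
  set V : ℝ := ∫ x, (x - μ) ^ 2 ∂P with hV
  set t : ℝ := b - μ with ht
  have ht0 : 0 < t := by simp [ht]; linarith
  have h1 : Integrable (fun x : ℝ => x) P := by
    have := (memLp_two_iff_integrable_sq (aestronglyMeasurable_id (μ := P))).2 (by simpa using h2)
    exact this.integrable (by norm_num)
  have hVint : Integrable (fun x : ℝ => (x - μ) ^ 2) P := by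
    have : (fun x : ℝ => (x - μ) ^ 2) = fun x => x ^ 2 + (-(2 * μ)) * x + μ ^ 2 := by
      funext x; ring
    rw [this]
    exact (h2.add (h1.const_mul _)).add (integrable_const _)
  have hV0 : 0 ≤ V := integral_nonneg (fun x => sq_nonneg _)
  set lam : ℝ := V / t with hlam
  have hlam0 : 0 ≤ lam := div_nonneg hV0 ht0.le
  have hg : Integrable (fun x : ℝ => (x - μ + lam) ^ 2) P := by
    have : (fun x : ℝ => (x - μ + lam) ^ 2)
        = fun x => (x - μ) ^ 2 + (2 * lam) * x + (lam ^ 2 - 2 * lam * μ) := by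
      funext x; ring
    rw [this]
    exact (hVint.add (h1.const_mul _)).add (integrable_const _)
  have hgint : ∫ x, (x - μ + lam) ^ 2 ∂P = V + lam ^ 2 := by
    calc ∫ x, (x - μ + lam) ^ 2 ∂P
        = ∫ x, ((x - μ) ^ 2 + ((2 * lam) * x + (lam ^ 2 - 2 * lam * μ))) ∂P := by
          apply integral_congr_ae; filter_upwards with x; ring
      _ = (∫ x, (x - μ) ^ 2 ∂P) + ∫ x, ((2 * lam) * x + (lam ^ 2 - 2 * lam * μ)) ∂P :=
          integral_add hVint ((h1.const_mul _).add (integrable_const _))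
      _ = V + ((∫ x, (2 * lam) * x ∂P) + ∫ _x, (lam ^ 2 - 2 * lam * μ) ∂P) := by
          rw [integral_add (h1.const_mul _) (integrable_const _)]
      _ = V + (2 * lam * μ + (lam ^ 2 - 2 * lam * μ)) := by
          rw [integral_const_mul, integral_const]
          simp [← hμ]
      _ = V + lam ^ 2 := by ring
  have markov := mul_meas_ge_le_integral_of_nonneg
    (ae_of_all P (fun x => sq_nonneg (x - μ + lam))) hg ((t + lam) ^ 2)
  rw [hgint] at markov
  have hsub : Ioi b ⊆ {x : ℝ | (t + lam) ^ 2 ≤ (x - μ + lam) ^ 2} := by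
    intro x hx
    have h1' : t + lam ≤ x - μ + lam := by
      simp only [mem_Ioi] at hx; simp [ht]; linarith
    exact pow_le_pow_left₀ (by positivity) h1' 2
  have hmono : (P (Ioi b)).toReal ≤ (P {x : ℝ | (t + lam) ^ 2 ≤ (x - μ + lam) ^ 2}).toReal :=
    ENNReal.toReal_mono (measure_ne_top P _) (measure_mono hsub)
  have htl : 0 < (t + lam) ^ 2 := by positivity
  have key : (P (Ioi b)).toReal ≤ V / (V + t ^ 2) := by
    have h3 : (P (Ioi b)).toReal ≤ (V + lam ^ 2) / (t + lam) ^ 2 := by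
      rw [le_div_iff₀ htl]
      calc (P (Ioi b)).toReal * (t + lam) ^ 2
          ≤ (P {x : ℝ | (t + lam) ^ 2 ≤ (x - μ + lam) ^ 2}).toReal * (t + lam) ^ 2 := by
            apply mul_le_mul_of_nonneg_right hmono htl.le
        _ ≤ V + lam ^ 2 := by rw [mul_comm]; exact markov
    refine h3.trans (le_of_eq ?_)
    rw [hlam]
    rw [div_eq_div_iff (by positivity) (by positivity)]
    field_simp
    ring
  have hcompl : (P (Iic b)).toReal = 1 - (P (Ioi b)).toReal := by
    have h4 : P (Iic b) = 1 - P (Ioi b) := by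
      have : Iic b = (Ioi b)ᶜ := by simp
      rw [this, measure_compl measurableSet_Ioi (measure_ne_top P _), measure_univ]
    rw [h4, ENNReal.toReal_sub_of_le prob_le_one ENNReal.one_ne_top, ENNReal.toReal_one]
  rw [hcompl]
  have hfin : t ^ 2 / (V + t ^ 2) ≤ 1 - (P (Ioi b)).toReal := by
    have : 1 - V / (V + t ^ 2) = t ^ 2 / (V + t ^ 2) := by
      field_simp
      ring
    linarith
  exact hfin

/-- Two-layer decomposition of the worst-case chance constraint over an
ambiguity set `S` of admissible (mean, standard deviation) pairs: the infimum
of `P (Iic b)` over probability measures whose mean/standard-deviation pair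
lies in `S` equals the infimum over `(m, s) ∈ S` of the tight Cantelli value
`(b - m)² / (s² + (b - m)²)`. -/
theorem worst_case_chance_constraint_decomposition
    (S : Set (ℝ × ℝ)) (hS : S.Nonempty)
    (hSpos : ∀ p ∈ S, 0 < p.2)
    (b : ℝ) (hb : ∀ p ∈ S, p.1 < b) :
    sInf {r : ℝ | ∃ P : Measure ℝ, IsProbabilityMeasure P ∧
        Integrable (fun x : ℝ => x ^ 2) P ∧
        ((∫ x, x ∂P), Real.sqrt (∫ x, (x - ∫ y, y ∂P) ^ 2 ∂P)) ∈ S ∧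
        r = (P (Set.Iic b)).toReal} =
      sInf ((fun p : ℝ × ℝ => (b - p.1) ^ 2 / (p.2 ^ 2 + (b - p.1) ^ 2)) '' S) := by
  set A : Set ℝ := {r : ℝ | ∃ P : Measure ℝ, IsProbabilityMeasure P ∧
        Integrable (fun x : ℝ => x ^ 2) P ∧
        ((∫ x, x ∂P), Real.sqrt (∫ x, (x - ∫ y, y ∂P) ^ 2 ∂P)) ∈ S ∧
        r = (P (Set.Iic b)).toReal} with hA
  have hAbdd : BddBelow A := by
    refine ⟨0, fun r hr => ?_⟩
    obtain ⟨P, hP, h2, hmem, rfl⟩ := hr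
    exact ENNReal.toReal_nonneg
  have hBbdd : BddBelow ((fun p : ℝ × ℝ => (b - p.1) ^ 2 / (p.2 ^ 2 + (b - p.1) ^ 2)) '' S) := by
    refine ⟨0, fun r hr => ?_⟩
    obtain ⟨⟨m, s⟩, hms, rfl⟩ := hr
    have hs := hSpos _ hms
    positivity
  have hAne : A.Nonempty := by
    obtain ⟨⟨m, s⟩, hms⟩ := hS
    have hs := hSpos _ hms
    have hmb := hb _ hms
    obtain ⟨P, hP, h2, hmean, hvar, hIic⟩ :=
      exists_two_point m s b (b - m + 1) hs hmb (by linarith)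
    refine ⟨_, P, hP, h2, ?_, rfl⟩
    rw [hmean, hvar, Real.sqrt_sq hs.le]
    exact hms
  apply le_antisymm
  · apply le_csInf (hS.image _)
    rintro r ⟨⟨m, s⟩, hms, rfl⟩
    have hs := hSpos _ hms
    have hmb := hb _ hms
    have key : ∀ u, b - m < u → sInf A ≤ u ^ 2 / (s ^ 2 + u ^ 2) := by
      intro u hu
      obtain ⟨P, hP, h2, hmean, hvar, hIic⟩ := exists_two_point m s b u hs hmb hu
      refine csInf_le hAbdd ⟨P, hP, h2, ?_, hIic.symm⟩
      rw [hmean, hvar, Real.sqrt_sq hs.le]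
      exact hms
    have cont : Filter.Tendsto (fun u : ℝ => u ^ 2 / (s ^ 2 + u ^ 2))
        (nhdsWithin (b - m) (Ioi (b - m))) (nhds ((b - m) ^ 2 / (s ^ 2 + (b - m) ^ 2))) := by
      have hc : ContinuousAt (fun u : ℝ => u ^ 2 / (s ^ 2 + u ^ 2)) (b - m) := by
        apply ContinuousAt.div (by fun_prop) (by fun_prop)
        positivity
      exact hc.continuousWithinAt.tendsto
    exact ge_of_tendsto cont
      (eventually_nhdsWithin_of_forall (fun u hu => key u hu))
  · apply le_csInf hAne
    rintro r ⟨P, hP, h2, hmem, rfl⟩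
    have hmb : (∫ x, x ∂P) < b := hb _ hmem
    have hcant := cantelli P hP h2 hmb
    refine le_trans (csInf_le hBbdd ⟨_, hmem, rfl⟩) ?_
    have hV0 : 0 ≤ ∫ x, (x - ∫ y, y ∂P) ^ 2 ∂P := integral_nonneg fun x => sq_nonneg _
    simp only
    rw [Real.sq_sqrt hV0]
    exact hcant
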